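/- arXiv:1604.02302 — 3 statements merged into one kernel-verified Lean document; each statement's English description precedes it below -/
import Mathlib

section
/- In the balanced compound model Λ₂ = A − Λ₁ with Λ₁ supported in (0,A), the cross J-function J₁₂(t) = E[Λ₁·exp(−(A−Λ₁)·κ_d·t^d/E[A−Λ₁])] / (E[Λ₁]·E[exp(−(A−Λ₁)·κ_d·t^d/E[A−Λ₁])]) satisfies J₁₂(t) ≥ 1 for all t ≥ 0. -/
open MeasureTheory Real

/-- Chebyshev association inequality (integral form) for pointwise "monovarying" functions. -/
lemma cheb_assoc {Ω : Type*} [MeasurableSpace Ω] (μ : Measure Ω) [IsProbabilityMeasure μ]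
    (f g : Ω → ℝ) (hf : Integrable f μ) (hg : Integrable g μ)
    (hfg : Integrable (fun ω => f ω * g ω) μ)
    (h : ∀ x y, 0 ≤ (f x - f y) * (g x - g y)) :
    (∫ ω, f ω ∂μ) * ∫ ω, g ω ∂μ ≤ ∫ ω, f ω * g ω ∂μ := by
  have h1 : Integrable (fun p : Ω × Ω => f p.1 * g p.2) (μ.prod μ) := hf.mul_prod hg
  have h2 : Integrable (fun p : Ω × Ω => g p.1 * f p.2) (μ.prod μ) := hg.mul_prod hf
  have h3 : Integrable (fun p : Ω × Ω => f p.1 * g p.1) (μ.prod μ) := by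
    have := hfg.mul_prod (integrable_const (1 : ℝ)) (ν := μ)
    simpa using this
  have h4 : Integrable (fun p : Ω × Ω => f p.2 * g p.2) (μ.prod μ) := by
    have := (integrable_const (1 : ℝ) (μ := μ)).mul_prod hfg
    simpa using this
  have key : 0 ≤ ∫ p : Ω × Ω, (f p.1 - f p.2) * (g p.1 - g p.2) ∂(μ.prod μ) :=
    integral_nonneg fun p => h p.1 p.2
  have expand : ∫ p : Ω × Ω, (f p.1 - f p.2) * (g p.1 - g p.2) ∂(μ.prod μ)
      = (∫ p : Ω × Ω, f p.1 * g p.1 ∂(μ.prod μ))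
        + (∫ p : Ω × Ω, f p.2 * g p.2 ∂(μ.prod μ))
        - (∫ p : Ω × Ω, f p.1 * g p.2 ∂(μ.prod μ))
        - (∫ p : Ω × Ω, g p.1 * f p.2 ∂(μ.prod μ)) := by
    have eq1 : (fun p : Ω × Ω => (f p.1 - f p.2) * (g p.1 - g p.2))
        = fun p : Ω × Ω => f p.1 * g p.1 + f p.2 * g p.2 - f p.1 * g p.2 - g p.1 * f p.2 := by
      funext p; ring
    have hs1 : Integrable (fun p : Ω × Ω => f p.1 * g p.1 + f p.2 * g p.2) (μ.prod μ) :=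
      h3.add h4
    have hs2 : Integrable
        (fun p : Ω × Ω => f p.1 * g p.1 + f p.2 * g p.2 - f p.1 * g p.2) (μ.prod μ) :=
      hs1.sub h1
    rw [eq1, integral_sub hs2 h2, integral_sub hs1 h1, integral_add h3 h4]
  have e1 : ∫ p : Ω × Ω, f p.1 * g p.1 ∂(μ.prod μ) = ∫ ω, f ω * g ω ∂μ := by
    have := integral_prod_mul (μ := μ) (ν := μ) (fun ω => f ω * g ω) (fun _ => (1 : ℝ))
    simpa using this
  have e2 : ∫ p : Ω × Ω, f p.2 * g p.2 ∂(μ.prod μ) = ∫ ω, f ω * g ω ∂μ := by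
    have := integral_prod_mul (μ := μ) (ν := μ) (fun _ => (1 : ℝ)) (fun ω => f ω * g ω)
    simpa using this
  have e3 : ∫ p : Ω × Ω, f p.1 * g p.2 ∂(μ.prod μ) = (∫ ω, f ω ∂μ) * ∫ ω, g ω ∂μ :=
    integral_prod_mul f g
  have e4 : ∫ p : Ω × Ω, g p.1 * f p.2 ∂(μ.prod μ) = (∫ ω, g ω ∂μ) * ∫ ω, f ω ∂μ :=
    integral_prod_mul g f
  rw [expand, e1, e2, e3, e4] at key
  nlinarith [key]

/-- In the balanced compound model `Λ₂ = A − Λ₁` with `Λ₁` supported in `(0,A)`,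
the cross `J`-function
`J₁₂(t) = E[Λ₁ exp(−Λ₂ κ_d t^d/E[Λ₂])]/(E[Λ₁]·E[exp(−Λ₂ κ_d t^d/E[Λ₂])])` satisfies
`J₁₂(t) ≥ 1` for all `t ≥ 0`, where `κ_d` is the volume of the unit ball in `ℝ^d`. -/
theorem stmt10 {Ω : Type*} [MeasurableSpace Ω] (μ : Measure Ω) [IsProbabilityMeasure μ]
    (d : ℕ) (Λ₁ : Ω → ℝ) (hm : Measurable Λ₁) (A : ℝ) (hA : 0 < A)
    (hsupp : μ {ω | 0 < Λ₁ ω ∧ Λ₁ ω < A} = 1)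
    (Λ₂ : Ω → ℝ) (hΛ₂ : ∀ ω, Λ₂ ω = A - Λ₁ ω)
    (t : ℝ) (ht : 0 ≤ t) :
    1 ≤ (∫ ω, Λ₁ ω * Real.exp (-(Λ₂ ω *
          ((volume (Metric.ball (0 : EuclideanSpace ℝ (Fin d)) 1)).toReal * t ^ d) /
            ∫ ω', Λ₂ ω' ∂μ)) ∂μ) /
        ((∫ ω, Λ₁ ω ∂μ) * ∫ ω, Real.exp (-(Λ₂ ω *
          ((volume (Metric.ball (0 : EuclideanSpace ℝ (Fin d)) 1)).toReal * t ^ d) /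
            ∫ ω', Λ₂ ω' ∂μ)) ∂μ) := by
  set K : ℝ := (volume (Metric.ball (0 : EuclideanSpace ℝ (Fin d)) 1)).toReal * t ^ d with hK
  have hK0 : 0 ≤ K := mul_nonneg ENNReal.toReal_nonneg (pow_nonneg ht d)
  set S : ℝ := ∫ ω', Λ₂ ω' ∂μ with hS
  -- a.e. facts
  have hae : ∀ᵐ ω ∂μ, 0 < Λ₁ ω ∧ Λ₁ ω < A := by
    rw [ae_iff]
    have : {ω | ¬(0 < Λ₁ ω ∧ Λ₁ ω < A)} = {ω | 0 < Λ₁ ω ∧ Λ₁ ω < A}ᶜ := rfl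
    rw [this, measure_compl (by
      exact (measurableSet_lt measurable_const hm).inter (measurableSet_lt hm measurable_const))
      (measure_ne_top μ _), hsupp, measure_univ]
    simp
  have hmΛ₂ : Measurable Λ₂ := by
    have : Λ₂ = fun ω => A - Λ₁ ω := funext hΛ₂
    rw [this]; exact measurable_const.sub hm
  -- S ≥ 0
  have hSnn : 0 ≤ S := by
    apply integral_nonneg_of_ae
    filter_upwards [hae] with ω hω
    simp only [Pi.zero_apply]
    rw [hΛ₂ ω]; linarith [hω.2]
  have hcnn : 0 ≤ K / S := div_nonneg hK0 hSnn
  set g : Ω → ℝ := fun ω => Real.exp (-(Λ₂ ω * K / S)) with hg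
  have hgpos : ∀ ω, 0 < g ω := fun ω => Real.exp_pos _
  have hgm : Measurable g := (((hmΛ₂.mul_const K).div_const S).neg).exp
  -- bounds
  have hΛ₁bd : ∀ᵐ ω ∂μ, ‖Λ₁ ω‖ ≤ A := by
    filter_upwards [hae] with ω hω
    rw [Real.norm_eq_abs, abs_le]; constructor <;> linarith [hω.1, hω.2]
  have hgbd : ∀ᵐ ω ∂μ, ‖g ω‖ ≤ 1 := by
    filter_upwards [hae] with ω hω
    rw [Real.norm_eq_abs, abs_of_pos (hgpos ω)]
    apply Real.exp_le_one_iff.mpr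
    rw [neg_nonpos]
    have : 0 ≤ Λ₂ ω := by rw [hΛ₂ ω]; linarith [hω.2]
    positivity
  have hΛ₁int : Integrable Λ₁ μ :=
    Integrable.mono' (integrable_const A) hm.aestronglyMeasurable hΛ₁bd
  have hgint : Integrable g μ :=
    Integrable.mono' (integrable_const 1) hgm.aestronglyMeasurable hgbd
  have hfgint : Integrable (fun ω => Λ₁ ω * g ω) μ := by
    apply Integrable.mono' (integrable_const A) (hm.mul hgm).aestronglyMeasurable
    filter_upwards [hΛ₁bd, hgbd] with ω h1 h2
    rw [Pi.mul_apply, norm_mul]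
    calc ‖Λ₁ ω‖ * ‖g ω‖ ≤ A * 1 := by
          apply mul_le_mul h1 h2 (norm_nonneg _) hA.le
      _ = A := mul_one A
  -- positivity of denominator pieces
  have hEΛ₁pos : 0 < ∫ ω, Λ₁ ω ∂μ := by
    rw [integral_pos_iff_support_of_nonneg_ae
      (by filter_upwards [hae] with ω hω; exact hω.1.le) hΛ₁int]
    have hsub : {ω | 0 < Λ₁ ω ∧ Λ₁ ω < A} ⊆ Function.support Λ₁ := fun ω hω => ne_of_gt hω.1
    calc (0 : ENNReal) < 1 := by norm_num
      _ = μ {ω | 0 < Λ₁ ω ∧ Λ₁ ω < A} := hsupp.symm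
      _ ≤ μ (Function.support Λ₁) := measure_mono hsub
  have hEgpos : 0 < ∫ ω, g ω ∂μ := by
    rw [integral_pos_iff_support_of_nonneg_ae
      (Filter.Eventually.of_forall fun ω => (hgpos ω).le) hgint]
    have : Function.support g = Set.univ := Set.eq_univ_of_forall fun ω => ne_of_gt (hgpos ω)
    rw [this, measure_univ]; norm_num
  -- monovariance
  have hstep : ∀ u v : ℝ, u ≤ v → u * K / S ≤ v * K / S := by
    intro u v h
    calc u * K / S = u * (K / S) := mul_div_assoc u K S
      _ ≤ v * (K / S) := mul_le_mul_of_nonneg_right h hcnn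
      _ = v * K / S := (mul_div_assoc v K S).symm
  have gmono : ∀ x y, Λ₁ x ≤ Λ₁ y → g x ≤ g y := by
    intro x y hle
    apply Real.exp_le_exp.mpr
    rw [neg_le_neg_iff, hΛ₂ x, hΛ₂ y]
    exact hstep _ _ (by linarith)
  have hmono : ∀ x y, 0 ≤ (Λ₁ x - Λ₁ y) * (g x - g y) := by
    intro x y
    rcases le_total (Λ₁ x) (Λ₁ y) with hle | hle
    · have : (Λ₁ x - Λ₁ y) * (g x - g y) = (Λ₁ y - Λ₁ x) * (g y - g x) := by ring
      rw [this]
      exact mul_nonneg (by linarith) (sub_nonneg.mpr (gmono x y hle))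
    · exact mul_nonneg (by linarith) (sub_nonneg.mpr (gmono y x hle))
  have main := cheb_assoc μ Λ₁ g hΛ₁int hgint hfgint hmono
  rw [le_div_iff₀ (mul_pos hEΛ₁pos hEgpos), one_mul]
  exact main
end

section
/- In the balanced compound model Λ₂ = A − Λ₁ with Λ₁ supported in (0,A) and having finite second moment, the function t ↦ J(t) := E[Λ₁·exp(−Λ₂·c·t)] / (E[Λ₁]·E[exp(−Λ₂·c·t)]) (for fixed c > 0) is nondecreasing in t ≥ 0. -/
open MeasureTheory Real

/-- In the balanced compound model `Λ₂ = A − Λ₁` with `Λ₁` supported in `(0,A)` and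
having finite second moment, the function
`t ↦ J(t) = E[Λ₁ exp(−Λ₂ c t)]/(E[Λ₁]·E[exp(−Λ₂ c t)])` (for fixed `c > 0`) is nondecreasing
on `t ≥ 0`. -/
theorem stmt11 {Ω : Type*} [MeasurableSpace Ω] (μ : Measure Ω) [IsProbabilityMeasure μ]
    (Λ₁ : Ω → ℝ) (hm : Measurable Λ₁) (A : ℝ) (hA : 0 < A)
    (hsupp : μ {ω | 0 < Λ₁ ω ∧ Λ₁ ω < A} = 1) (hL2 : MemLp Λ₁ 2 μ)
    (Λ₂ : Ω → ℝ) (hΛ₂ : ∀ ω, Λ₂ ω = A - Λ₁ ω) (c : ℝ) (hc : 0 < c) :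
    ∀ s t : ℝ, 0 ≤ s → s ≤ t →
      (∫ ω, Λ₁ ω * Real.exp (-(Λ₂ ω * c * s)) ∂μ) /
          ((∫ ω, Λ₁ ω ∂μ) * ∫ ω, Real.exp (-(Λ₂ ω * c * s)) ∂μ) ≤
        (∫ ω, Λ₁ ω * Real.exp (-(Λ₂ ω * c * t)) ∂μ) /
          ((∫ ω, Λ₁ ω ∂μ) * ∫ ω, Real.exp (-(Λ₂ ω * c * t)) ∂μ) := by
  intro s t hs hst
  have ht : 0 ≤ t := hs.trans hst
  have hm2 : Measurable Λ₂ := by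
    have : Λ₂ = fun ω => A - Λ₁ ω := funext hΛ₂
    rw [this]; exact measurable_const.sub hm
  have hSmeas : MeasurableSet {ω | 0 < Λ₁ ω ∧ Λ₁ ω < A} :=
    (measurableSet_lt measurable_const hm).inter (measurableSet_lt hm measurable_const)
  have hae : ∀ᵐ ω ∂μ, 0 < Λ₁ ω ∧ Λ₁ ω < A := by
    rw [ae_iff]
    have h1 : {ω | ¬(0 < Λ₁ ω ∧ Λ₁ ω < A)} = {ω | 0 < Λ₁ ω ∧ Λ₁ ω < A}ᶜ := by
      ext ω; simp [Set.mem_compl_iff]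
    rw [h1, measure_compl hSmeas (measure_ne_top μ _), hsupp, measure_univ]
    simp
  have hGmeas : ∀ u : ℝ, Measurable fun ω => Real.exp (-(Λ₂ ω * c * u)) := fun u =>
    (((hm2.mul_const c).mul_const u).neg).exp
  have hGbd : ∀ u : ℝ, 0 ≤ u → ∀ᵐ ω ∂μ, Real.exp (-(Λ₂ ω * c * u)) ≤ 1 := by
    intro u hu
    filter_upwards [hae] with ω hω
    have h2 : 0 ≤ Λ₂ ω := by rw [hΛ₂]; linarith [hω.2]
    have h3 : -(Λ₂ ω * c * u) ≤ 0 := by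
      have : 0 ≤ Λ₂ ω * c * u := by positivity
      linarith
    simpa using Real.exp_le_exp.2 h3
  have hGint : ∀ u : ℝ, 0 ≤ u → Integrable (fun ω => Real.exp (-(Λ₂ ω * c * u))) μ := by
    intro u hu
    refine Integrable.mono' (integrable_const 1) (hGmeas u).aestronglyMeasurable ?_
    filter_upwards [hGbd u hu] with ω h
    rw [Real.norm_eq_abs, abs_of_pos (Real.exp_pos _)]; exact h
  have hFGint : ∀ u : ℝ, 0 ≤ u →
      Integrable (fun ω => Λ₁ ω * Real.exp (-(Λ₂ ω * c * u))) μ := by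
    intro u hu
    refine Integrable.mono' (integrable_const A) (hm.mul (hGmeas u)).aestronglyMeasurable ?_
    filter_upwards [hGbd u hu, hae] with ω h hω
    rw [Real.norm_eq_abs, abs_mul, abs_of_pos hω.1, abs_of_pos (Real.exp_pos _)]
    calc Λ₁ ω * Real.exp (-(Λ₂ ω * c * u)) ≤ Λ₁ ω * 1 :=
          mul_le_mul_of_nonneg_left h hω.1.le
      _ ≤ A := by linarith [hω.2]
  have hFint : Integrable Λ₁ μ := hL2.integrable one_le_two
  have hEF : 0 < ∫ ω, Λ₁ ω ∂μ := by
    rw [integral_pos_iff_support_of_nonneg_ae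
      (by filter_upwards [hae] with ω h; exact h.1.le) hFint]
    have hsub : {ω | 0 < Λ₁ ω ∧ Λ₁ ω < A} ⊆ Function.support Λ₁ := fun ω h => ne_of_gt h.1
    calc (0 : ENNReal) < 1 := one_pos
      _ = μ {ω | 0 < Λ₁ ω ∧ Λ₁ ω < A} := hsupp.symm
      _ ≤ μ (Function.support Λ₁) := measure_mono hsub
  have hEG : ∀ u : ℝ, 0 ≤ u → 0 < ∫ ω, Real.exp (-(Λ₂ ω * c * u)) ∂μ := fun u hu =>
    integral_exp_pos (hGint u hu)
  -- the key cross inequality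
  have key : (∫ ω, Λ₁ ω * Real.exp (-(Λ₂ ω * c * s)) ∂μ) *
      (∫ ω, Real.exp (-(Λ₂ ω * c * t)) ∂μ) ≤
      (∫ ω, Λ₁ ω * Real.exp (-(Λ₂ ω * c * t)) ∂μ) *
      (∫ ω, Real.exp (-(Λ₂ ω * c * s)) ∂μ) := by
    set Gs : Ω → ℝ := fun ω => Real.exp (-(Λ₂ ω * c * s)) with hGs
    set Gt : Ω → ℝ := fun ω => Real.exp (-(Λ₂ ω * c * t)) with hGt
    have hnn : ∀ z : Ω × Ω,
        0 ≤ (Λ₁ z.1 - Λ₁ z.2) * (Gt z.1 * Gs z.2 - Gs z.1 * Gt z.2) := by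
      intro z
      have hb : Λ₁ z.1 - Λ₁ z.2 = Λ₂ z.2 - Λ₂ z.1 := by rw [hΛ₂, hΛ₂]; ring
      rw [hb]
      simp only [hGs, hGt, ← Real.exp_add]
      rcases le_total (Λ₂ z.1) (Λ₂ z.2) with h | h
      · refine mul_nonneg (by linarith) (sub_nonneg.2 (Real.exp_le_exp.2 ?_))
        nlinarith [mul_nonneg (mul_nonneg (sub_nonneg.2 h) (sub_nonneg.2 hst)) hc.le]
      · refine mul_nonneg_iff.2 (Or.inr ⟨by linarith, sub_nonpos.2 (Real.exp_le_exp.2 ?_)⟩)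
        nlinarith [mul_nonneg (mul_nonneg (sub_nonneg.2 h) (sub_nonneg.2 hst)) hc.le]
    have hint0 : (0:ℝ) ≤ ∫ z, (Λ₁ z.1 - Λ₁ z.2) * (Gt z.1 * Gs z.2 - Gs z.1 * Gt z.2)
        ∂(μ.prod μ) := integral_nonneg hnn
    have i1 : Integrable (fun z : Ω × Ω => (Λ₁ z.1 * Gt z.1) * Gs z.2) (μ.prod μ) :=
      (hFGint t ht).mul_prod (hGint s hs)
    have i2 : Integrable (fun z : Ω × Ω => (Λ₁ z.1 * Gs z.1) * Gt z.2) (μ.prod μ) :=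
      (hFGint s hs).mul_prod (hGint t ht)
    have i3 : Integrable (fun z : Ω × Ω => Gt z.1 * (Λ₁ z.2 * Gs z.2)) (μ.prod μ) :=
      (hGint t ht).mul_prod (hFGint s hs)
    have i4 : Integrable (fun z : Ω × Ω => Gs z.1 * (Λ₁ z.2 * Gt z.2)) (μ.prod μ) :=
      (hGint s hs).mul_prod (hFGint t ht)
    have expand : (fun z : Ω × Ω => (Λ₁ z.1 - Λ₁ z.2) * (Gt z.1 * Gs z.2 - Gs z.1 * Gt z.2)) =
        fun z : Ω × Ω => ((Λ₁ z.1 * Gt z.1) * Gs z.2 - (Λ₁ z.1 * Gs z.1) * Gt z.2) -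
          (Gt z.1 * (Λ₁ z.2 * Gs z.2) - Gs z.1 * (Λ₁ z.2 * Gt z.2)) := by
      funext z; ring
    have i12 : Integrable (fun z : Ω × Ω => (Λ₁ z.1 * Gt z.1) * Gs z.2 -
        (Λ₁ z.1 * Gs z.1) * Gt z.2) (μ.prod μ) := i1.sub i2
    have i34 : Integrable (fun z : Ω × Ω => Gt z.1 * (Λ₁ z.2 * Gs z.2) -
        Gs z.1 * (Λ₁ z.2 * Gt z.2)) (μ.prod μ) := i3.sub i4
    have e1 : ∫ z : Ω × Ω, (Λ₁ z.1 * Gt z.1) * Gs z.2 ∂(μ.prod μ) =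
        (∫ ω, Λ₁ ω * Gt ω ∂μ) * ∫ ω, Gs ω ∂μ := integral_prod_mul (fun ω => Λ₁ ω * Gt ω) Gs
    have e2 : ∫ z : Ω × Ω, (Λ₁ z.1 * Gs z.1) * Gt z.2 ∂(μ.prod μ) =
        (∫ ω, Λ₁ ω * Gs ω ∂μ) * ∫ ω, Gt ω ∂μ := integral_prod_mul (fun ω => Λ₁ ω * Gs ω) Gt
    have e3 : ∫ z : Ω × Ω, Gt z.1 * (Λ₁ z.2 * Gs z.2) ∂(μ.prod μ) =
        (∫ ω, Gt ω ∂μ) * ∫ ω, Λ₁ ω * Gs ω ∂μ := integral_prod_mul Gt (fun ω => Λ₁ ω * Gs ω)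
    have e4 : ∫ z : Ω × Ω, Gs z.1 * (Λ₁ z.2 * Gt z.2) ∂(μ.prod μ) =
        (∫ ω, Gs ω ∂μ) * ∫ ω, Λ₁ ω * Gt ω ∂μ := integral_prod_mul Gs (fun ω => Λ₁ ω * Gt ω)
    rw [expand] at hint0
    rw [integral_sub i12 i34, integral_sub i1 i2, integral_sub i3 i4, e1, e2, e3, e4] at hint0
    linarith
  -- conclude
  have hd1 : 0 < (∫ ω, Λ₁ ω ∂μ) * ∫ ω, Real.exp (-(Λ₂ ω * c * s)) ∂μ :=
    mul_pos hEF (hEG s hs)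
  have hd2 : 0 < (∫ ω, Λ₁ ω ∂μ) * ∫ ω, Real.exp (-(Λ₂ ω * c * t)) ∂μ :=
    mul_pos hEF (hEG t ht)
  rw [div_le_div_iff₀ hd1 hd2]
  calc (∫ ω, Λ₁ ω * Real.exp (-(Λ₂ ω * c * s)) ∂μ) *
        ((∫ ω, Λ₁ ω ∂μ) * ∫ ω, Real.exp (-(Λ₂ ω * c * t)) ∂μ)
      = (∫ ω, Λ₁ ω ∂μ) * ((∫ ω, Λ₁ ω * Real.exp (-(Λ₂ ω * c * s)) ∂μ) *
        (∫ ω, Real.exp (-(Λ₂ ω * c * t)) ∂μ)) := by ring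
    _ ≤ (∫ ω, Λ₁ ω ∂μ) * ((∫ ω, Λ₁ ω * Real.exp (-(Λ₂ ω * c * t)) ∂μ) *
        (∫ ω, Real.exp (-(Λ₂ ω * c * s)) ∂μ)) := by
        exact mul_le_mul_of_nonneg_left key hEF.le
    _ = (∫ ω, Λ₁ ω * Real.exp (-(Λ₂ ω * c * t)) ∂μ) *
        ((∫ ω, Λ₁ ω ∂μ) * ∫ ω, Real.exp (-(Λ₂ ω * c * s)) ∂μ) := by ring
end

section
/- In the linked compound model Λ₂ = A·Λ₁ (A > 0) with Λ₁ nonnegative having finite second moment and positive mean, the function t ↦ J(t) := E[Λ₁·exp(−Λ₁·c·t)] / (E[Λ₁]·E[exp(−Λ₁·c·t)]) (for fixed c > 0) is nonincreasing in t ≥ 0. -/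
open MeasureTheory Real

/-- In the linked compound model `Λ₂ = A·Λ₁` (`A > 0`) with `Λ₁` nonnegative,
having finite second moment and positive mean, the function
`t ↦ J(t) = E[Λ₁ exp(−Λ₁ c t)]/(E[Λ₁]·E[exp(−Λ₁ c t)])` (for fixed `c > 0`) is nonincreasing
on `t ≥ 0`. -/
theorem stmt12 {Ω : Type*} [MeasurableSpace Ω] (μ : Measure Ω) [IsProbabilityMeasure μ]
    (Λ₁ : Ω → ℝ) (hm : Measurable Λ₁) (hnn : ∀ ω, 0 ≤ Λ₁ ω)
    (hL2 : MemLp Λ₁ 2 μ) (hpos : 0 < ∫ ω, Λ₁ ω ∂μ)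
    (A : ℝ) (hA : 0 < A) (Λ₂ : Ω → ℝ) (hΛ₂ : ∀ ω, Λ₂ ω = A * Λ₁ ω)
    (c : ℝ) (hc : 0 < c) :
    ∀ s t : ℝ, 0 ≤ s → s ≤ t →
      (∫ ω, Λ₁ ω * Real.exp (-(Λ₁ ω * c * t)) ∂μ) /
          ((∫ ω, Λ₁ ω ∂μ) * ∫ ω, Real.exp (-(Λ₁ ω * c * t)) ∂μ) ≤
        (∫ ω, Λ₁ ω * Real.exp (-(Λ₁ ω * c * s)) ∂μ) /
          ((∫ ω, Λ₁ ω ∂μ) * ∫ ω, Real.exp (-(Λ₁ ω * c * s)) ∂μ) := by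
  intro s t hs hst
  have hts : 0 ≤ t - s := sub_nonneg.2 hst
  set w : Ω → ℝ := fun ω => Real.exp (-(Λ₁ ω * c * s)) with hw
  set g : Ω → ℝ := fun ω => Real.exp (-(Λ₁ ω * c * (t - s))) with hg
  have hwh : ∀ ω, Real.exp (-(Λ₁ ω * c * t)) = w ω * g ω := by
    intro ω
    rw [hw, hg, ← Real.exp_add]
    congr 1
    ring
  have hmw : Measurable w := ((hm.mul_const c).mul_const s).neg.exp
  have hmg : Measurable g := ((hm.mul_const c).mul_const (t - s)).neg.exp
  have hwle : ∀ ω, w ω ≤ 1 := by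
    intro ω
    rw [hw]
    apply Real.exp_le_one_iff.2
    simp only [neg_nonpos]
    exact mul_nonneg (mul_nonneg (hnn ω) hc.le) hs
  have hgle : ∀ ω, g ω ≤ 1 := by
    intro ω
    rw [hg]
    apply Real.exp_le_one_iff.2
    simp only [neg_nonpos]
    exact mul_nonneg (mul_nonneg (hnn ω) hc.le) hts
  have hwpos : ∀ ω, 0 < w ω := fun ω => Real.exp_pos _
  have hgpos : ∀ ω, 0 < g ω := fun ω => Real.exp_pos _
  have hΛint : Integrable Λ₁ μ := hL2.integrable one_le_two
  have hI1 : Integrable w μ := by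
    refine (integrable_const (1 : ℝ)).mono' hmw.aestronglyMeasurable ?_
    filter_upwards with ω
    rw [Real.norm_eq_abs, abs_of_pos (hwpos ω)]
    exact hwle ω
  have hI3 : Integrable (fun ω => w ω * g ω) μ := by
    refine (integrable_const (1 : ℝ)).mono' (hmw.mul hmg).aestronglyMeasurable ?_
    filter_upwards with ω
    rw [Real.norm_eq_abs, abs_of_pos (mul_pos (hwpos ω) (hgpos ω))]
    exact mul_le_one₀ (hwle ω) (hgpos ω).le (hgle ω)
  have hI2 : Integrable (fun ω => Λ₁ ω * w ω) μ := by
    refine hΛint.mono' (hm.mul hmw).aestronglyMeasurable ?_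
    filter_upwards with ω
    rw [Real.norm_eq_abs, abs_of_nonneg (mul_nonneg (hnn ω) (hwpos ω).le)]
    calc Λ₁ ω * w ω ≤ Λ₁ ω * 1 := by
          exact mul_le_mul_of_nonneg_left (hwle ω) (hnn ω)
      _ = Λ₁ ω := mul_one _
  have hI4 : Integrable (fun ω => Λ₁ ω * (w ω * g ω)) μ := by
    refine hΛint.mono' (hm.mul (hmw.mul hmg)).aestronglyMeasurable ?_
    filter_upwards with ω
    rw [Real.norm_eq_abs,
      abs_of_nonneg (mul_nonneg (hnn ω) (mul_pos (hwpos ω) (hgpos ω)).le)]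
    calc Λ₁ ω * (w ω * g ω) ≤ Λ₁ ω * 1 := by
          refine mul_le_mul_of_nonneg_left ?_ (hnn ω)
          exact mul_le_one₀ (hwle ω) (hgpos ω).le (hgle ω)
      _ = Λ₁ ω := mul_one _
  have hbpos : 0 < ∫ ω, w ω ∂μ := by
    refine integral_exp_pos ?_
    exact hI1
  have hepos : 0 < ∫ ω, w ω * g ω ∂μ := by
    have : (fun ω => w ω * g ω) = fun ω => Real.exp (-(Λ₁ ω * c * t)) := by
      funext ω; rw [← hwh ω]
    rw [this]
    refine integral_exp_pos ?_
    rw [← this]; exact hI3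
  -- the key Chebyshev-type correlation inequality
  have key : (∫ ω, Λ₁ ω * (w ω * g ω) ∂μ) * (∫ ω, w ω ∂μ) ≤
      (∫ ω, Λ₁ ω * w ω ∂μ) * (∫ ω, w ω * g ω ∂μ) := by
    have hG : ∫ z : Ω × Ω,
        (Λ₁ z.1 * (w z.1 * g z.1)) * w z.2 - (Λ₁ z.1 * w z.1) * (w z.2 * g z.2)
          - ((w z.1 * g z.1) * (Λ₁ z.2 * w z.2)
            - w z.1 * (Λ₁ z.2 * (w z.2 * g z.2))) ∂(μ.prod μ) ≤ 0 := by
      refine integral_nonpos fun z => ?_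
      have hexp : (Λ₁ z.1 * (w z.1 * g z.1)) * w z.2 - (Λ₁ z.1 * w z.1) * (w z.2 * g z.2)
          - ((w z.1 * g z.1) * (Λ₁ z.2 * w z.2) - w z.1 * (Λ₁ z.2 * (w z.2 * g z.2)))
          = ((Λ₁ z.1 - Λ₁ z.2) * (g z.1 - g z.2)) * (w z.1 * w z.2) := by ring
      rw [hexp]
      have hmono : ∀ x y : Ω, Λ₁ x ≤ Λ₁ y → g y ≤ g x := by
        intro x y hxy
        rw [hg]
        apply Real.exp_le_exp.2
        apply neg_le_neg
        have h1 : Λ₁ x * c ≤ Λ₁ y * c := mul_le_mul_of_nonneg_right hxy hc.le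
        exact mul_le_mul_of_nonneg_right h1 hts
      have h1 : (Λ₁ z.1 - Λ₁ z.2) * (g z.1 - g z.2) ≤ 0 := by
        rcases le_total (Λ₁ z.1) (Λ₁ z.2) with hle | hle
        · exact mul_nonpos_of_nonpos_of_nonneg (sub_nonpos.2 hle)
            (sub_nonneg.2 (hmono _ _ hle))
        · exact mul_nonpos_of_nonneg_of_nonpos (sub_nonneg.2 hle)
            (sub_nonpos.2 (hmono _ _ hle))
      exact mul_nonpos_of_nonpos_of_nonneg h1
        (mul_pos (hwpos z.1) (hwpos z.2)).le
    have hIp1 : Integrable (fun z : Ω × Ω => (Λ₁ z.1 * (w z.1 * g z.1)) * w z.2)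
        (μ.prod μ) := hI4.mul_prod hI1
    have hIp2 : Integrable (fun z : Ω × Ω => (Λ₁ z.1 * w z.1) * (w z.2 * g z.2))
        (μ.prod μ) := hI2.mul_prod hI3
    have hIp3 : Integrable (fun z : Ω × Ω => (w z.1 * g z.1) * (Λ₁ z.2 * w z.2))
        (μ.prod μ) := hI3.mul_prod hI2
    have hIp4 : Integrable (fun z : Ω × Ω => w z.1 * (Λ₁ z.2 * (w z.2 * g z.2)))
        (μ.prod μ) := hI1.mul_prod hI4
    have hIp12 : Integrable (fun z : Ω × Ω =>
        (Λ₁ z.1 * (w z.1 * g z.1)) * w z.2 - (Λ₁ z.1 * w z.1) * (w z.2 * g z.2))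
        (μ.prod μ) := hIp1.sub hIp2
    have hIp34 : Integrable (fun z : Ω × Ω =>
        (w z.1 * g z.1) * (Λ₁ z.2 * w z.2) - w z.1 * (Λ₁ z.2 * (w z.2 * g z.2)))
        (μ.prod μ) := hIp3.sub hIp4
    rw [integral_sub hIp12 hIp34, integral_sub hIp1 hIp2,
      integral_sub hIp3 hIp4] at hG
    have e1 : ∫ a : Ω × Ω, Λ₁ a.1 * (w a.1 * g a.1) * w a.2 ∂μ.prod μ =
        (∫ ω, Λ₁ ω * (w ω * g ω) ∂μ) * ∫ ω, w ω ∂μ :=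
      integral_prod_mul (fun ω => Λ₁ ω * (w ω * g ω)) w
    have e2 : ∫ a : Ω × Ω, Λ₁ a.1 * w a.1 * (w a.2 * g a.2) ∂μ.prod μ =
        (∫ ω, Λ₁ ω * w ω ∂μ) * ∫ ω, w ω * g ω ∂μ :=
      integral_prod_mul (fun ω => Λ₁ ω * w ω) (fun ω => w ω * g ω)
    have e3 : ∫ a : Ω × Ω, w a.1 * g a.1 * (Λ₁ a.2 * w a.2) ∂μ.prod μ =
        (∫ ω, w ω * g ω ∂μ) * ∫ ω, Λ₁ ω * w ω ∂μ :=
      integral_prod_mul (fun ω => w ω * g ω) (fun ω => Λ₁ ω * w ω)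
    have e4 : ∫ a : Ω × Ω, w a.1 * (Λ₁ a.2 * (w a.2 * g a.2)) ∂μ.prod μ =
        (∫ ω, w ω ∂μ) * ∫ ω, Λ₁ ω * (w ω * g ω) ∂μ :=
      integral_prod_mul w (fun ω => Λ₁ ω * (w ω * g ω))
    rw [e1, e2, e3, e4] at hG
    linarith
  simp only [hwh]
  rw [div_le_div_iff₀ (mul_pos hpos hepos) (mul_pos hpos hbpos)]
  have hm0 := hpos
  nlinarith [key, hpos]
end
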